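/- Let N ≥ 2, let f : ℝ → ℝ be concave on [0,1] with f(0) = 0 and f(x) ≥ 0 for x ∈ [0,1], and let l : ℝ → ℝ be convex and non-increasing on [1/N, 1] with f(x) = x·l(x) for all x ∈ (0,1]. Let (w¹, P¹) (with K₁ ≥ 1 cells) and (w², P²) (with K₂ ≥ 1 cells) be two configurations on the same N classes, with confidences e₁ and e₂ and f-impurities I₁ and I₂ respectively. If e₁ ≥ e₂, then l(e₁)·I₁ ≤ (f(e₁) + (N−1)·f((1−e₁)/(N−1)))·I₂. (Paper's Theorem 5: a configuration maximizing the confidence yields an R(e^max) = u(e^max)/l(e^max) approximation of the minimum impurity.) -/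
import Mathlib


open Finset

/-- The maximum of a real-valued vector over the finite index set `Fin N` (`N > 0`). -/
noncomputable def colMax {N : ℕ} (hN : 0 < N) (v : Fin N → ℝ) : ℝ :=
  Finset.univ.sup' (Finset.univ_nonempty_iff.mpr ⟨⟨0, hN⟩⟩) v

lemma colMax_bounds {N : ℕ} (hN : 0 < N) (p : Fin N → ℝ) (hp : ∀ i, 0 ≤ p i)
    (hs : ∑ i, p i = 1) :
    (∀ i, p i ≤ colMax hN p) ∧ 1 / (N : ℝ) ≤ colMax hN p ∧ colMax hN p ≤ 1 := by
  have hle : ∀ i, p i ≤ colMax hN p := fun i => Finset.le_sup' p (Finset.mem_univ i)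
  refine ⟨hle, ?_, ?_⟩
  · have h1 : (1:ℝ) ≤ N * colMax hN p := by
      calc (1:ℝ) = ∑ i, p i := hs.symm
        _ ≤ ∑ _i : Fin N, colMax hN p := Finset.sum_le_sum fun i _ => hle i
        _ = N * colMax hN p := by
            simp [Finset.sum_const, Finset.card_univ, nsmul_eq_mul]
    rw [div_le_iff₀ (by positivity)]
    linarith
  · apply Finset.sup'_le
    intro i _
    calc p i ≤ ∑ j, p j := Finset.single_le_sum (fun j _ => hp j) (Finset.mem_univ i)
      _ = 1 := hs

lemma cell_upper {N : ℕ} (hN : 2 ≤ N) (hN0 : 0 < N) (f : ℝ → ℝ)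
    (hf : ConcaveOn ℝ (Set.Icc (0:ℝ) 1) f)
    (p : Fin N → ℝ) (hp : ∀ i, 0 ≤ p i) (hs : ∑ i, p i = 1) :
    ∑ i, f (p i) ≤ f (colMax hN0 p)
      + ((N:ℝ) - 1) * f ((1 - colMax hN0 p) / ((N:ℝ) - 1)) := by
  have hNR : (0:ℝ) < (N:ℝ) - 1 := by
    have : (2:ℝ) ≤ (N:ℝ) := by exact_mod_cast hN
    linarith
  have hp1 : ∀ i, p i ≤ 1 := fun i => by
    calc p i ≤ ∑ j, p j := Finset.single_le_sum (fun j _ => hp j) (Finset.mem_univ i)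
      _ = 1 := hs
  obtain ⟨i₀, -, hi₀⟩ :=
    Finset.exists_mem_eq_sup' (Finset.univ_nonempty_iff.mpr ⟨(⟨0, hN0⟩ : Fin N)⟩) p
  have hM : colMax hN0 p = p i₀ := hi₀
  have hcard : ((Finset.univ.erase i₀).card : ℝ) = (N:ℝ) - 1 := by
    rw [Finset.card_erase_of_mem (Finset.mem_univ i₀), Finset.card_univ, Fintype.card_fin]
    rw [Nat.cast_sub (by omega)]
    simp
  have hsplit : p i₀ + ∑ i ∈ Finset.univ.erase i₀, p i = 1 := by
    rw [Finset.add_sum_erase _ _ (Finset.mem_univ i₀)]; exact hs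
  have hjen := hf.le_map_sum (t := Finset.univ.erase i₀)
      (w := fun _ => 1/((N:ℝ)-1)) (p := p)
      (fun i _ => by positivity)
      (by rw [Finset.sum_const, nsmul_eq_mul, hcard]; field_simp)
      (fun i _ => ⟨hp i, hp1 i⟩)
  have hsum : ∑ i ∈ Finset.univ.erase i₀, (1/((N:ℝ)-1)) • p i
      = (1 - p i₀) / ((N:ℝ)-1) := by
    simp only [smul_eq_mul, ← Finset.mul_sum]
    rw [show ∑ i ∈ Finset.univ.erase i₀, p i = 1 - p i₀ by linarith]
    ring
  rw [hsum] at hjen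
  have herase : ∑ i ∈ Finset.univ.erase i₀, f (p i)
      ≤ ((N:ℝ) - 1) * f ((1 - p i₀) / ((N:ℝ)-1)) := by
    have h2 : ∑ i ∈ Finset.univ.erase i₀, (1/((N:ℝ)-1)) • f (p i)
        = (1/((N:ℝ)-1)) * ∑ i ∈ Finset.univ.erase i₀, f (p i) := by
      simp only [smul_eq_mul]
      rw [Finset.mul_sum]
    rw [h2] at hjen
    have h3 := mul_le_mul_of_nonneg_left hjen hNR.le
    calc ∑ i ∈ Finset.univ.erase i₀, f (p i)
        = ((N:ℝ)-1) * (1/((N:ℝ)-1) * ∑ i ∈ Finset.univ.erase i₀, f (p i)) := by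
          field_simp
      _ ≤ ((N:ℝ) - 1) * f ((1 - p i₀) / ((N:ℝ)-1)) := h3
  calc ∑ i, f (p i) = f (p i₀) + ∑ i ∈ Finset.univ.erase i₀, f (p i) :=
        (Finset.add_sum_erase _ _ (Finset.mem_univ i₀)).symm
    _ ≤ f (p i₀) + ((N:ℝ) - 1) * f ((1 - p i₀) / ((N:ℝ)-1)) := by linarith
    _ = _ := by rw [hM]

lemma cell_lower {N : ℕ} (hN0 : 0 < N) (f : ℝ → ℝ)
    (hf : ConcaveOn ℝ (Set.Icc (0:ℝ) 1) f) (hf0 : f 0 = 0)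
    (p : Fin N → ℝ) (hp : ∀ i, 0 ≤ p i) (hs : ∑ i, p i = 1) :
    f (colMax hN0 p) / colMax hN0 p ≤ ∑ i, f (p i) := by
  obtain ⟨hle, hM1, hM2⟩ := colMax_bounds hN0 p hp hs
  set M := colMax hN0 p with hMdef
  have hMpos : 0 < M := lt_of_lt_of_le (by positivity) hM1
  have hpt : ∀ i, (p i / M) * f M ≤ f (p i) := by
    intro i
    have ha : 0 ≤ p i / M := div_nonneg (hp i) hMpos.le
    have hb : 0 ≤ 1 - p i / M := by
      have : p i / M ≤ 1 := (div_le_one hMpos).mpr (hle i)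
      linarith
    have := hf.2 (x := M) ⟨hMpos.le, hM2⟩ (y := 0) ⟨le_refl _, by norm_num⟩
      ha hb (by ring)
    simp only [smul_eq_mul, mul_zero, add_zero, hf0] at this
    rwa [div_mul_cancel₀ _ hMpos.ne'] at this
  calc f M / M = ∑ i, (p i / M) * f M := by
        rw [← Finset.sum_mul, ← Finset.sum_div, hs]; ring
    _ ≤ ∑ i, f (p i) := Finset.sum_le_sum fun i _ => hpt i

/-- Paper's Theorem 5: a configuration with larger confidence is an
`R(e) = u(e)/l(e)` approximation of the other, i.e.
`l(e₁) * I₁ ≤ u(e₁) * I₂` where `u(t) = f(t) + (N-1) f((1-t)/(N-1))`. -/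
theorem R_emax_approximation (N K₁ K₂ : ℕ) (hN : 2 ≤ N) (hK₁ : 1 ≤ K₁) (hK₂ : 1 ≤ K₂)
    (f l : ℝ → ℝ)
    (hf : ConcaveOn ℝ (Set.Icc (0 : ℝ) 1) f) (hf0 : f 0 = 0)
    (hfnn : ∀ x ∈ Set.Icc (0 : ℝ) 1, 0 ≤ f x)
    (hl : ConvexOn ℝ (Set.Icc (1 / (N : ℝ)) 1) l)
    (hlmono : AntitoneOn l (Set.Icc (1 / (N : ℝ)) 1))
    (hfl : ∀ x ∈ Set.Ioc (0 : ℝ) 1, f x = x * l x)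
    (w₁ : Fin K₁ → ℝ) (hw₁ : ∀ k, 0 ≤ w₁ k) (hws₁ : ∑ k, w₁ k = 1)
    (P₁ : Fin K₁ → Fin N → ℝ) (hP₁ : ∀ k i, 0 ≤ P₁ k i) (hPs₁ : ∀ k, ∑ i, P₁ k i = 1)
    (w₂ : Fin K₂ → ℝ) (hw₂ : ∀ k, 0 ≤ w₂ k) (hws₂ : ∑ k, w₂ k = 1)
    (P₂ : Fin K₂ → Fin N → ℝ) (hP₂ : ∀ k i, 0 ≤ P₂ k i) (hPs₂ : ∀ k, ∑ i, P₂ k i = 1)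
    (e₁ e₂ : ℝ)
    (he₁ : e₁ = ∑ k, w₁ k * colMax (by omega) (P₁ k))
    (he₂ : e₂ = ∑ k, w₂ k * colMax (by omega) (P₂ k))
    (hee : e₂ ≤ e₁) :
    l e₁ * (∑ k, ∑ i, w₁ k * f (P₁ k i)) ≤
      (f e₁ + ((N : ℝ) - 1) * f ((1 - e₁) / ((N : ℝ) - 1))) *
        (∑ k, ∑ i, w₂ k * f (P₂ k i)) := by
  have hN0 : 0 < N := by omega
  have hN2R : (2:ℝ) ≤ (N:ℝ) := by exact_mod_cast hN
  have hNR : (0:ℝ) < (N:ℝ) - 1 := by linarith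
  have hNinv : (0:ℝ) < 1 / (N:ℝ) := by positivity
  have hNinv1 : 1 / (N:ℝ) ≤ 1 := by
    rw [div_le_one (by positivity)]
    exact_mod_cast hN0
  set M₁ : Fin K₁ → ℝ := fun k => colMax hN0 (P₁ k) with hM₁def
  set M₂ : Fin K₂ → ℝ := fun k => colMax hN0 (P₂ k) with hM₂def
  have hM₁ : ∀ k, M₁ k ∈ Set.Icc (1/(N:ℝ)) 1 := fun k =>
    ⟨(colMax_bounds hN0 (P₁ k) (hP₁ k) (hPs₁ k)).2.1,
     (colMax_bounds hN0 (P₁ k) (hP₁ k) (hPs₁ k)).2.2⟩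
  have hM₂ : ∀ k, M₂ k ∈ Set.Icc (1/(N:ℝ)) 1 := fun k =>
    ⟨(colMax_bounds hN0 (P₂ k) (hP₂ k) (hPs₂ k)).2.1,
     (colMax_bounds hN0 (P₂ k) (hP₂ k) (hPs₂ k)).2.2⟩
  have he₁' : e₁ = ∑ k, w₁ k * M₁ k := he₁
  have he₂' : e₂ = ∑ k, w₂ k * M₂ k := he₂
  have he₁mem : e₁ ∈ Set.Icc (1/(N:ℝ)) 1 := by
    constructor
    · rw [he₁']
      calc 1/(N:ℝ) = ∑ k, w₁ k * (1/(N:ℝ)) := by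
            rw [← Finset.sum_mul, hws₁, one_mul]
        _ ≤ ∑ k, w₁ k * M₁ k :=
            Finset.sum_le_sum fun k _ =>
              mul_le_mul_of_nonneg_left (hM₁ k).1 (hw₁ k)
    · rw [he₁']
      calc ∑ k, w₁ k * M₁ k ≤ ∑ k, w₁ k * 1 :=
            Finset.sum_le_sum fun k _ =>
              mul_le_mul_of_nonneg_left (hM₁ k).2 (hw₁ k)
        _ = 1 := by rw [← Finset.sum_mul, hws₁, one_mul]
  have he₂mem : e₂ ∈ Set.Icc (1/(N:ℝ)) 1 := by
    constructor
    · rw [he₂']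
      calc 1/(N:ℝ) = ∑ k, w₂ k * (1/(N:ℝ)) := by
            rw [← Finset.sum_mul, hws₂, one_mul]
        _ ≤ ∑ k, w₂ k * M₂ k :=
            Finset.sum_le_sum fun k _ =>
              mul_le_mul_of_nonneg_left (hM₂ k).1 (hw₂ k)
    · rw [he₂']
      calc ∑ k, w₂ k * M₂ k ≤ ∑ k, w₂ k * 1 :=
            Finset.sum_le_sum fun k _ =>
              mul_le_mul_of_nonneg_left (hM₂ k).2 (hw₂ k)
        _ = 1 := by rw [← Finset.sum_mul, hws₂, one_mul]
  -- the upper-bound function u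
  set u : ℝ → ℝ := fun t => f t + ((N:ℝ) - 1) * f ((1 - t) / ((N:ℝ) - 1)) with hudef
  -- concavity of u on [1/N, 1]
  have harg : ∀ t ∈ Set.Icc (1/(N:ℝ)) 1, (1 - t) / ((N:ℝ) - 1) ∈ Set.Icc (0:ℝ) 1 := by
    intro t ht
    constructor
    · apply div_nonneg _ hNR.le; linarith [ht.2]
    · rw [div_le_one hNR]
      have h1 : 1/(N:ℝ) ≤ t := ht.1
      linarith [hN2R, hNinv]
  have hg : ConcaveOn ℝ (Set.Icc (1/(N:ℝ)) 1) (fun t => f ((1 - t) / ((N:ℝ) - 1))) := by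
    refine ⟨convex_Icc _ _, ?_⟩
    intro x hx y hy a b ha hb hab
    have hX := harg x hx
    have hY := harg y hy
    have hcomb := hf.2 hX hY ha hb hab
    simp only [smul_eq_mul] at hcomb ⊢
    have h2 : a * (1 - x) + b * (1 - y) = 1 - (a * x + b * y) := by
      linear_combination hab
    have hkey : a * ((1 - x) / ((N:ℝ) - 1)) + b * ((1 - y) / ((N:ℝ) - 1))
        = (1 - (a * x + b * y)) / ((N:ℝ) - 1) := by
      calc a * ((1 - x) / ((N:ℝ) - 1)) + b * ((1 - y) / ((N:ℝ) - 1))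
          = (a * (1 - x) + b * (1 - y)) / ((N:ℝ) - 1) := by ring
        _ = (1 - (a * x + b * y)) / ((N:ℝ) - 1) := by rw [h2]
    rw [hkey] at hcomb
    exact hcomb
  have hfsub : ConcaveOn ℝ (Set.Icc (1/(N:ℝ)) 1) f :=
    hf.subset (Set.Icc_subset_Icc hNinv.le le_rfl) (convex_Icc _ _)
  have hu : ConcaveOn ℝ (Set.Icc (1/(N:ℝ)) 1) u := hfsub.add (hg.smul hNR.le)
  -- upper bound: I₁ ≤ u e₁
  have hI₁form : (∑ k, ∑ i, w₁ k * f (P₁ k i)) = ∑ k, w₁ k * ∑ i, f (P₁ k i) := by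
    simp [Finset.mul_sum]
  have hI₁le : (∑ k, ∑ i, w₁ k * f (P₁ k i)) ≤ u e₁ := by
    rw [hI₁form]
    have step1 : ∑ k, w₁ k * ∑ i, f (P₁ k i) ≤ ∑ k, w₁ k * u (M₁ k) :=
      Finset.sum_le_sum fun k _ =>
        mul_le_mul_of_nonneg_left (cell_upper hN hN0 f hf (P₁ k) (hP₁ k) (hPs₁ k)) (hw₁ k)
    have step2 : ∑ k, w₁ k * u (M₁ k) ≤ u e₁ := by
      have := hu.le_map_sum (t := Finset.univ) (w := w₁) (p := M₁)
        (fun k _ => hw₁ k) hws₁ (fun k _ => hM₁ k)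
      simp only [smul_eq_mul] at this
      rwa [← he₁'] at this
    linarith
  -- lower bound: l e₁ ≤ I₂
  have hI₂form : (∑ k, ∑ i, w₂ k * f (P₂ k i)) = ∑ k, w₂ k * ∑ i, f (P₂ k i) := by
    simp [Finset.mul_sum]
  have hlM : ∀ k, l (M₂ k) ≤ ∑ i, f (P₂ k i) := by
    intro k
    have hMk := hM₂ k
    have hMkpos : 0 < M₂ k := lt_of_lt_of_le hNinv hMk.1
    have hcl : f (M₂ k) / M₂ k ≤ ∑ i, f (P₂ k i) :=
      cell_lower hN0 f hf hf0 (P₂ k) (hP₂ k) (hPs₂ k)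
    have hflM : f (M₂ k) = M₂ k * l (M₂ k) := hfl _ ⟨hMkpos, hMk.2⟩
    rwa [hflM, mul_comm, mul_div_assoc, div_self hMkpos.ne', mul_one] at hcl
  have hI₂ge : l e₁ ≤ ∑ k, ∑ i, w₂ k * f (P₂ k i) := by
    rw [hI₂form]
    have step1 : l e₂ ≤ ∑ k, w₂ k * l (M₂ k) := by
      have := hl.map_sum_le (t := Finset.univ) (w := w₂) (p := M₂)
        (fun k _ => hw₂ k) hws₂ (fun k _ => hM₂ k)
      simp only [smul_eq_mul] at this
      rwa [← he₂'] at this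
    have step2 : ∑ k, w₂ k * l (M₂ k) ≤ ∑ k, w₂ k * ∑ i, f (P₂ k i) :=
      Finset.sum_le_sum fun k _ =>
        mul_le_mul_of_nonneg_left (hlM k) (hw₂ k)
    have step0 : l e₁ ≤ l e₂ := hlmono he₂mem he₁mem hee
    linarith
  -- nonnegativity
  have hl1nn : 0 ≤ l e₁ := by
    have h1 : l 1 ≤ l e₁ := hlmono he₁mem ⟨hNinv1, le_refl _⟩ he₁mem.2
    have h2 : f 1 = 1 * l 1 := hfl 1 ⟨by norm_num, le_refl _⟩
    have h3 : 0 ≤ f 1 := hfnn 1 ⟨by norm_num, le_refl _⟩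
    rw [one_mul] at h2
    linarith
  have hu1nn : 0 ≤ u e₁ := by
    have h1 : 0 ≤ f e₁ := hfnn e₁ ⟨le_trans hNinv.le he₁mem.1, he₁mem.2⟩
    have h2 : 0 ≤ f ((1 - e₁) / ((N:ℝ) - 1)) := hfnn _ (harg e₁ he₁mem)
    have : 0 ≤ ((N:ℝ) - 1) * f ((1 - e₁) / ((N:ℝ) - 1)) := mul_nonneg hNR.le h2
    simp only [hudef]
    linarith
  calc l e₁ * (∑ k, ∑ i, w₁ k * f (P₁ k i))
      ≤ l e₁ * u e₁ := mul_le_mul_of_nonneg_left hI₁le hl1nn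
    _ = u e₁ * l e₁ := mul_comm _ _
    _ ≤ u e₁ * (∑ k, ∑ i, w₂ k * f (P₂ k i)) :=
        mul_le_mul_of_nonneg_left hI₂ge hu1nn
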